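/- Let n ≥ 1 be an integer and a > 0 a real number. For any vector t ∈ ℝⁿ with t_i > 0 for all i and ∑_{i=1}^{n} t_i² = n·a², one has ∏_{i=1}^{n} Φ(t_i) ≤ Φ(a)ⁿ, and equality holds if and only if t_i = a for all i. -/

import Mathlib

open scoped BigOperators

/-- The standard normal cumulative distribution function
`Φ(t) = ∫_{−∞}^{t} (1/√(2π)) e^{−τ²/2} dτ`. -/
noncomputable def stdNormalCDF (t : ℝ) : ℝ :=
  ∫ τ in Set.Iic t, (Real.sqrt (2 * Real.pi))⁻¹ * Real.exp (-τ ^ 2 / 2)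

open MeasureTheory in
/-- The standard normal probability density function. -/
noncomputable def stdNormalPDF (t : ℝ) : ℝ :=
  (Real.sqrt (2 * Real.pi))⁻¹ * Real.exp (-t ^ 2 / 2)

section aux

open MeasureTheory Real

lemma stdNormalPDF_pos (t : ℝ) : 0 < stdNormalPDF t := by
  unfold stdNormalPDF
  positivity

lemma continuous_stdNormalPDF : Continuous stdNormalPDF := by
  unfold stdNormalPDF
  continuity

lemma integrable_stdNormalPDF : Integrable stdNormalPDF := by
  have h : Integrable (fun t : ℝ => Real.exp (-((1:ℝ)/2) * t ^ 2)) :=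
    integrable_exp_neg_mul_sq (by norm_num)
  have := h.const_mul ((Real.sqrt (2 * Real.pi))⁻¹)
  refine this.congr ?_
  filter_upwards with t
  unfold stdNormalPDF
  ring_nf

lemma stdNormalPDF_strictAntiOn : StrictAntiOn stdNormalPDF (Set.Ici 0) := by
  intro x hx y hy hxy
  unfold stdNormalPDF
  have : Real.exp (-y ^ 2 / 2) < Real.exp (-x ^ 2 / 2) := by
    apply Real.exp_lt_exp.2
    have : x ^ 2 < y ^ 2 := by nlinarith [Set.mem_Ici.1 hx]
    linarith
  have h0 : (0:ℝ) < (Real.sqrt (2 * Real.pi))⁻¹ := by positivity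
  nlinarith

lemma stdNormalCDF_eq (t : ℝ) : stdNormalCDF t = ∫ τ in Set.Iic t, stdNormalPDF τ := rfl

lemma stdNormalCDF_pos (t : ℝ) : 0 < stdNormalCDF t := by
  rw [stdNormalCDF_eq]
  rw [setIntegral_pos_iff_support_of_nonneg_ae]
  · have : Function.support stdNormalPDF ∩ Set.Iic t = Set.Iic t := by
      apply Set.inter_eq_self_of_subset_right
      intro x _
      exact (stdNormalPDF_pos x).ne'
    rw [this]
    simp [Real.volume_Iic]
  · filter_upwards with x using (stdNormalPDF_pos x).le
  · exact integrable_stdNormalPDF.integrableOn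

lemma stdNormalCDF_mono : Monotone stdNormalCDF := by
  intro x y hxy
  rw [stdNormalCDF_eq, stdNormalCDF_eq]
  apply setIntegral_mono_set integrable_stdNormalPDF.integrableOn
  · filter_upwards with x using (stdNormalPDF_pos x).le
  · exact HasSubset.Subset.eventuallyLE (Set.Iic_subset_Iic.2 hxy)

lemma hasDerivAt_stdNormalCDF (t : ℝ) : HasDerivAt stdNormalCDF (stdNormalPDF t) t := by
  have key : ∀ u : ℝ, stdNormalCDF u = stdNormalCDF 0 + ∫ τ in (0:ℝ)..u, stdNormalPDF τ := by
    intro u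
    rw [stdNormalCDF_eq, stdNormalCDF_eq]
    have := intervalIntegral.integral_Iic_sub_Iic
      (integrable_stdNormalPDF.integrableOn (s := Set.Iic (0:ℝ)))
      (integrable_stdNormalPDF.integrableOn (s := Set.Iic u))
    linarith
  have h : HasDerivAt (fun u => stdNormalCDF 0 + ∫ τ in (0:ℝ)..u, stdNormalPDF τ)
      (stdNormalPDF t) t := by
    apply HasDerivAt.const_add
    exact intervalIntegral.integral_hasDerivAt_right
      integrable_stdNormalPDF.intervalIntegrable
      (continuous_stdNormalPDF.stronglyMeasurableAtFilter _ _)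
      continuous_stdNormalPDF.continuousAt
  exact h.congr_of_eventuallyEq (by filter_upwards with u; rw [key u])

/-- `x ↦ log Φ(√x)`. -/
noncomputable def logCDFsqrt (x : ℝ) : ℝ := Real.log (stdNormalCDF (Real.sqrt x))

/-- The derivative of `logCDFsqrt` on `(0, ∞)`. -/
noncomputable def logCDFsqrt' (x : ℝ) : ℝ :=
  stdNormalPDF (Real.sqrt x) / (2 * Real.sqrt x * stdNormalCDF (Real.sqrt x))

lemma hasDerivAt_logCDFsqrt {x : ℝ} (hx : 0 < x) :
    HasDerivAt logCDFsqrt (logCDFsqrt' x) x := by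
  have hs : HasDerivAt Real.sqrt (1 / (2 * Real.sqrt x)) x := Real.hasDerivAt_sqrt hx.ne'
  have hc : HasDerivAt (fun y => stdNormalCDF (Real.sqrt y))
      (stdNormalPDF (Real.sqrt x) * (1 / (2 * Real.sqrt x))) x :=
    (hasDerivAt_stdNormalCDF (Real.sqrt x)).comp x hs
  have hl := hc.log (stdNormalCDF_pos (Real.sqrt x)).ne'
  convert hl using 1
  · rfl
  unfold logCDFsqrt'
  have h1 : Real.sqrt x ≠ 0 := (Real.sqrt_pos.2 hx).ne'
  have h2 : stdNormalCDF (Real.sqrt x) ≠ 0 := (stdNormalCDF_pos _).ne'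
  field_simp

lemma logCDFsqrt'_strictAnti : StrictAntiOn logCDFsqrt' (Set.Ioi 0) := by
  intro x hx y hy hxy
  have hx0 : (0:ℝ) < x := hx
  have hy0 : (0:ℝ) < y := hy
  have hsx : 0 < Real.sqrt x := Real.sqrt_pos.2 hx0
  have hsy : 0 < Real.sqrt y := Real.sqrt_pos.2 hy0
  have hss : Real.sqrt x < Real.sqrt y := Real.sqrt_lt_sqrt hx0.le hxy
  have hnum : stdNormalPDF (Real.sqrt y) < stdNormalPDF (Real.sqrt x) :=
    stdNormalPDF_strictAntiOn hsx.le hsy.le hss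
  have hden : 2 * Real.sqrt x * stdNormalCDF (Real.sqrt x)
      ≤ 2 * Real.sqrt y * stdNormalCDF (Real.sqrt y) := by
    have h1 := stdNormalCDF_mono hss.le
    have h2 := stdNormalCDF_pos (Real.sqrt x)
    nlinarith
  have hdpos : 0 < 2 * Real.sqrt x * stdNormalCDF (Real.sqrt x) := by
    have := stdNormalCDF_pos (Real.sqrt x); positivity
  unfold logCDFsqrt'
  exact div_lt_div₀ hnum hden (stdNormalPDF_pos _).le hdpos

lemma logCDFsqrt_strictConcave : StrictConcaveOn ℝ (Set.Ioi (0:ℝ)) logCDFsqrt := by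
  have hanti : StrictAntiOn (deriv logCDFsqrt) (interior (Set.Ioi (0:ℝ))) := by
    rw [interior_Ioi]
    intro x hx y hy hxy
    rw [(hasDerivAt_logCDFsqrt hx).deriv, (hasDerivAt_logCDFsqrt hy).deriv]
    exact logCDFsqrt'_strictAnti hx hy hxy
  exact hanti.strictConcaveOn_of_deriv (convex_Ioi 0)
    (fun x hx => (hasDerivAt_logCDFsqrt hx).continuousAt.continuousWithinAt)

end aux

/-- For `n ≥ 1`, `a > 0` and `t ∈ ℝⁿ` with `tᵢ > 0` for all `i` and `∑ tᵢ² = n·a²`,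
one has `∏ Φ(tᵢ) ≤ Φ(a)ⁿ`, with equality iff `tᵢ = a` for all `i`. -/
theorem prod_stdNormalCDF_le_of_sum_sq_eq (n : ℕ) (hn : 1 ≤ n) (a : ℝ) (ha : 0 < a)
    (t : Fin n → ℝ) (htpos : ∀ i, 0 < t i) (ht : ∑ i, (t i) ^ 2 = n * a ^ 2) :
    (∏ i, stdNormalCDF (t i) ≤ (stdNormalCDF a) ^ n) ∧
      ((∏ i, stdNormalCDF (t i) = (stdNormalCDF a) ^ n) ↔ ∀ i, t i = a) := by
  have hn0 : (0:ℝ) < n := by exact_mod_cast hn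
  set w : Fin n → ℝ := fun _ => (n:ℝ)⁻¹ with hw
  set p : Fin n → ℝ := fun i => (t i) ^ 2 with hp
  have hw0 : ∀ i ∈ Finset.univ, 0 < w (i : Fin n) := fun i _ => by positivity
  have hw1 : ∑ i : Fin n, w i = 1 := by
    simp [hw, Finset.sum_const, Finset.card_univ]
    field_simp
  have hmem : ∀ i ∈ Finset.univ, p (i : Fin n) ∈ Set.Ioi (0:ℝ) := fun i _ => by
    simpa [hp] using pow_pos (htpos i) 2
  have hsum : ∑ i : Fin n, w i • p i = a ^ 2 := by
    simp only [smul_eq_mul, hw, hp]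
    rw [← Finset.mul_sum, ht]
    field_simp
  have hgp : ∀ i : Fin n, logCDFsqrt (p i) = Real.log (stdNormalCDF (t i)) := by
    intro i
    simp [logCDFsqrt, hp, Real.sqrt_sq (htpos i).le]
  have hga : logCDFsqrt (a ^ 2) = Real.log (stdNormalCDF a) := by
    simp [logCDFsqrt, Real.sqrt_sq ha.le]
  have prodpos : 0 < ∏ i, stdNormalCDF (t i) :=
    Finset.prod_pos fun i _ => stdNormalCDF_pos _
  have powpos : 0 < (stdNormalCDF a) ^ n := pow_pos (stdNormalCDF_pos a) n
  have hlogprod : Real.log (∏ i, stdNormalCDF (t i)) = ∑ i, Real.log (stdNormalCDF (t i)) :=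
    Real.log_prod fun i _ => (stdNormalCDF_pos _).ne'
  have hlogpow : Real.log ((stdNormalCDF a) ^ n) = n * Real.log (stdNormalCDF a) :=
    by rw [Real.log_pow]
  -- Jensen's inequality
  have jensen : ∑ i : Fin n, w i • logCDFsqrt (p i) ≤ logCDFsqrt (∑ i : Fin n, w i • p i) :=
    logCDFsqrt_strictConcave.concaveOn.le_map_sum (fun i hi => (hw0 i hi).le) hw1 hmem
  have key : ∑ i, Real.log (stdNormalCDF (t i)) ≤ (n:ℝ) * Real.log (stdNormalCDF a) := by
    rw [hsum, hga] at jensen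
    have : ∑ i : Fin n, w i • logCDFsqrt (p i)
        = (n:ℝ)⁻¹ * ∑ i, Real.log (stdNormalCDF (t i)) := by
      rw [Finset.mul_sum]
      exact Finset.sum_congr rfl fun i _ => by rw [hgp i, smul_eq_mul]
    rw [this] at jensen
    rw [← mul_le_mul_iff_right₀ (show (0:ℝ) < (n:ℝ)⁻¹ by positivity)]
    calc (n:ℝ)⁻¹ * ∑ i, Real.log (stdNormalCDF (t i)) ≤ Real.log (stdNormalCDF a) := jensen
      _ = (n:ℝ)⁻¹ * ((n:ℝ) * Real.log (stdNormalCDF a)) := by field_simp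
  have hineq : ∏ i, stdNormalCDF (t i) ≤ (stdNormalCDF a) ^ n := by
    rw [← Real.log_le_log_iff prodpos powpos, hlogprod, hlogpow]
    exact key
  refine ⟨hineq, ⟨fun heq => ?_, fun h => ?_⟩⟩
  · -- equality case
    have hlogeq : ∑ i, Real.log (stdNormalCDF (t i)) = (n:ℝ) * Real.log (stdNormalCDF a) := by
      have := congrArg Real.log heq
      rwa [hlogprod, hlogpow] at this
    have heq2 : logCDFsqrt (∑ i : Fin n, w i • p i) = ∑ i : Fin n, w i • logCDFsqrt (p i) := by
      rw [hsum, hga]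
      have : ∑ i : Fin n, w i • logCDFsqrt (p i)
          = (n:ℝ)⁻¹ * ∑ i, Real.log (stdNormalCDF (t i)) := by
        rw [Finset.mul_sum]
        exact Finset.sum_congr rfl fun i _ => by rw [hgp i, smul_eq_mul]
      rw [this, hlogeq]
      field_simp
    have hall := (logCDFsqrt_strictConcave.map_sum_eq_iff hw0 hw1 hmem).1 heq2
    intro i
    have hpi : p i = a ^ 2 := by
      have := hall i (Finset.mem_univ i)
      rwa [hsum] at this
    have : (t i) ^ 2 = a ^ 2 := hpi
    calc t i = Real.sqrt ((t i) ^ 2) := (Real.sqrt_sq (htpos i).le).symm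
      _ = Real.sqrt (a ^ 2) := by rw [this]
      _ = a := Real.sqrt_sq ha.le
  · -- if all equal
    rw [Finset.prod_congr rfl fun i _ => by rw [h i]]
    simp
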